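/- Let n ≥ 1, let G be a compact Hausdorff topological group with normalized Haar measure, let V be a real Banach space, and let ρ : G →* (V ≃L[ℝ] V) be a representation of G by continuous linear automorphisms of V such that the action map G × V → V, (g, v) ↦ ρ g v, is continuous. Suppose f : Gⁿ → V is a continuous inhomogeneous n-cocycle, i.e. f is continuous and for all g₀, g₁, …, g_n ∈ G: ρ(g₀)(f(g₁, …, g_n)) + Σ_{i=1}^{n} (−1)^i f(g₀, …, g_{i−1} * g_i, …, g_n) + (−1)^{n+1} f(g₀, …, g_{n−1}) = 0. Then f is a continuous coboundary: there exists a continuous map F : Gⁿ⁻¹ → V such that for all g₁, …, g_n ∈ G, f(g₁, …, g_n) = ρ(g₁)(F(g₂, …, g_n)) + Σ_{i=1}^{n−1} (−1)^i F(g₁, …, g_i * g_{i+1}, …, g_n) + (−1)^n F(g₁, …, g_{n−1}). (In other words, the continuous group cohomology Hⁿ_cont(G, V) vanishes for n ≥ 1 when G is compact and V is a real Banach G-module.) -/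

import Mathlib

set_option maxHeartbeats 1000000


open scoped BigOperators

open MeasureTheory

private lemma snoc_succ_aux {n : ℕ} {α : Type*} (g : Fin (n + 1) → α) (x : α) :
    (fun i : Fin (n + 1) => (Fin.snoc g x : Fin (n + 2) → α) i.succ)
      = Fin.snoc (fun i : Fin n => g i.succ) x := by
  funext i
  refine Fin.lastCases ?_ (fun k => ?_) i
  · simp [Fin.succ_last]
  · simp [Fin.succ_castSucc, -Fin.castSucc_succ]

private lemma snoc_zero_aux {n : ℕ} {α : Type*} (g : Fin (n + 1) → α) (x : α) :
    (Fin.snoc g x : Fin (n + 2) → α) 0 = g 0 := by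
  rw [← Fin.castSucc_zero, Fin.snoc_castSucc]

private lemma contract_snoc_castSucc {n : ℕ} {α : Type*} (op : α → α → α) (m : Fin n)
    (g : Fin (n + 1) → α) (x : α) :
    Fin.contractNth (m.castSucc.castSucc) op (Fin.snoc g x)
      = Fin.snoc (Fin.contractNth m.castSucc op g) x := by
  funext k
  refine Fin.lastCases ?_ (fun l => ?_) k
  · rw [Fin.contractNth_apply_of_gt _ _ _ _ (by simpa using m.isLt)]
    simp [Fin.succ_last]
  · rw [Fin.snoc_castSucc]
    rcases lt_trichotomy (l : ℕ) (m : ℕ) with h | h | h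
    · rw [Fin.contractNth_apply_of_lt _ _ _ _ (by simpa using h),
        Fin.contractNth_apply_of_lt _ _ _ _ (by simpa using h)]
      simp
    · rw [Fin.contractNth_apply_of_eq _ _ _ _ (by simpa using h),
        Fin.contractNth_apply_of_eq _ _ _ _ (by simpa using h)]
      simp [Fin.succ_castSucc, -Fin.castSucc_succ]
    · rw [Fin.contractNth_apply_of_gt _ _ _ _ (by simpa using h),
        Fin.contractNth_apply_of_gt _ _ _ _ (by simpa using h)]
      simp [Fin.succ_castSucc, -Fin.castSucc_succ]

private lemma contract_snoc_last {n : ℕ} {α : Type*} (op : α → α → α)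
    (g : Fin (n + 1) → α) (x : α) :
    Fin.contractNth ((Fin.last n).castSucc) op (Fin.snoc g x)
      = Fin.snoc (Fin.contractNth (Fin.last n) op g) (op (g (Fin.last n)) x) := by
  funext k
  refine Fin.lastCases ?_ (fun l => ?_) k
  · rw [Fin.contractNth_apply_of_eq _ _ _ _ (by simp)]
    simp [Fin.succ_last]
  · rw [Fin.snoc_castSucc]
    rw [Fin.contractNth_apply_of_lt _ _ _ _ (by simpa using l.isLt),
      Fin.contractNth_apply_of_lt _ _ _ _ (by simpa using l.isLt)]
    simp

private lemma contract_snoc_top {n : ℕ} {α : Type*} (op : α → α → α)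
    (g : Fin (n + 1) → α) (x : α) :
    Fin.contractNth (Fin.last (n + 1)) op (Fin.snoc g x) = g := by
  funext k
  rw [Fin.contractNth_apply_of_lt _ _ _ _ (by simpa using k.isLt)]
  simp

/-- Vanishing of continuous group cohomology of a compact group with coefficients in a real
Banach representation: every continuous inhomogeneous `(n+1)`-cocycle (here `n + 1 ≥ 1`) is
the coboundary of a continuous `n`-cochain.  The inhomogeneous differential of a cochain `c`
is `(dc)(g) = ρ(g 0)(c (g ∘ succ)) + ∑ j, (-1)^(j+1) • c (Fin.contractNth j (*) g)`. -/
theorem stmt16 (n : ℕ) {G : Type*} [Group G] [TopologicalSpace G] [IsTopologicalGroup G]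
    [CompactSpace G] [T2Space G]
    {V : Type*} [NormedAddCommGroup V] [NormedSpace ℝ V] [CompleteSpace V]
    (ρ : G →* (V ≃L[ℝ] V))
    (hρ : Continuous fun p : G × V => ρ p.1 p.2)
    (f : (Fin (n + 1) → G) → V) (hf : Continuous f)
    (hcocycle : ∀ g : Fin (n + 2) → G,
      ρ (g 0) (f (fun i => g i.succ)) +
        ∑ j : Fin (n + 2), ((-1 : ℝ) ^ ((j : ℕ) + 1)) • f (Fin.contractNth j (· * ·) g) = 0) :
    ∃ F : (Fin n → G) → V, Continuous F ∧ ∀ g : Fin (n + 1) → G,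
      f g = ρ (g 0) (F (fun i => g i.succ)) +
        ∑ j : Fin (n + 1), ((-1 : ℝ) ^ ((j : ℕ) + 1)) • F (Fin.contractNth j (· * ·) g) := by
  classical
  letI : MeasurableSpace G := borel G
  haveI : BorelSpace G := ⟨rfl⟩
  set μ : Measure G := Measure.haarMeasure ⊤ with hμdef
  haveI : IsProbabilityMeasure μ := ⟨by
    rw [← TopologicalSpace.PositiveCompacts.coe_top (α := G)]
    exact Measure.haarMeasure_self⟩
  -- continuity of snoc
  have hsnoc_cont : Continuous fun p : (Fin n → G) × G => (Fin.snoc p.1 p.2 : Fin (n + 1) → G) := by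
    apply continuous_pi
    intro i
    refine Fin.lastCases ?_ (fun k => ?_) i
    · simp only [Fin.snoc_last]
      exact continuous_snd
    · simp only [Fin.snoc_castSucc]
      exact (continuous_apply k).comp continuous_fst
  -- integrability of continuous functions
  have hint' : ∀ φ : G → V, Continuous φ → Integrable φ μ := fun φ hφ =>
    hφ.integrable_of_hasCompactSupport (HasCompactSupport.of_compactSpace _)
  have hint : ∀ h : Fin n → G, Integrable (fun x => f (Fin.snoc h x)) μ := fun h =>
    hint' _ (hf.comp (hsnoc_cont.comp (continuous_const.prodMk continuous_id)))
  -- the averaged cochain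
  set A : (Fin n → G) → V := fun h => ∫ x, f (Fin.snoc h x) ∂μ with hAdef
  -- continuity of integration on C(G, V)
  have hIntCont : Continuous fun φ : C(G, V) => ∫ x, φ x ∂μ := by
    refine LipschitzWith.continuous (K := 1) (LipschitzWith.of_dist_le_mul fun φ ψ => ?_)
    rw [dist_eq_norm, ← integral_sub (hint' _ φ.continuous) (hint' _ ψ.continuous)]
    calc ‖∫ x, (φ x - ψ x) ∂μ‖ ≤ dist φ ψ * (μ Set.univ).toReal := by
          refine norm_integral_le_of_norm_le_const (Filter.Eventually.of_forall fun x => ?_)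
          rw [← dist_eq_norm]
          exact ContinuousMap.dist_apply_le_dist x
      _ = ↑(1 : NNReal) * dist φ ψ := by simp [measure_univ]
  have hAcont : Continuous A := by
    have hΦ : Continuous fun p : (Fin n → G) × G => f (Fin.snoc p.1 p.2) := hf.comp hsnoc_cont
    exact hIntCont.comp
      (ContinuousMap.continuous (ContinuousMap.curry ⟨_, hΦ⟩))
  refine ⟨fun h => ((-1 : ℝ) ^ (n + 1)) • A h, hAcont.const_smul _, fun g => ?_⟩
  -- pointwise cocycle identity applied to `snoc g x`
  have hpt : ∀ x : G,
      (ρ (g 0)) (f (Fin.snoc (fun i => g i.succ) x))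
        + ((∑ j : Fin n, ((-1 : ℝ) ^ ((j : ℕ) + 1)) •
              f (Fin.snoc (Fin.contractNth j.castSucc (· * ·) g) x))
          + ((-1 : ℝ) ^ (n + 1)) •
              f (Fin.snoc (Fin.contractNth (Fin.last n) (· * ·) g) (g (Fin.last n) * x))
          + ((-1 : ℝ) ^ (n + 2)) • f g) = 0 := by
    intro x
    have h0 := hcocycle (Fin.snoc g x)
    rw [Fin.sum_univ_castSucc (n := n + 1)] at h0
    rw [Fin.sum_univ_castSucc (n := n)] at h0
    simp only [snoc_zero_aux, snoc_succ_aux, contract_snoc_castSucc, contract_snoc_last,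
      contract_snoc_top, Fin.coe_castSucc, Fin.val_last] at h0
    exact h0
  -- integrate the pointwise identity
  have hzero : (∫ x, ((ρ (g 0)) (f (Fin.snoc (fun i => g i.succ) x))
        + ((∑ j : Fin n, ((-1 : ℝ) ^ ((j : ℕ) + 1)) •
              f (Fin.snoc (Fin.contractNth j.castSucc (· * ·) g) x))
          + ((-1 : ℝ) ^ (n + 1)) •
              f (Fin.snoc (Fin.contractNth (Fin.last n) (· * ·) g) (g (Fin.last n) * x))
          + ((-1 : ℝ) ^ (n + 2)) • f g)) ∂μ) = 0 := by
    rw [show (fun x => ((ρ (g 0)) (f (Fin.snoc (fun i => g i.succ) x))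
        + ((∑ j : Fin n, ((-1 : ℝ) ^ ((j : ℕ) + 1)) •
              f (Fin.snoc (Fin.contractNth j.castSucc (· * ·) g) x))
          + ((-1 : ℝ) ^ (n + 1)) •
              f (Fin.snoc (Fin.contractNth (Fin.last n) (· * ·) g) (g (Fin.last n) * x))
          + ((-1 : ℝ) ^ (n + 2)) • f g))) = fun _ => (0 : V) from funext hpt]
    simp
  have hintT1 : Integrable (fun x => (ρ (g 0)) (f (Fin.snoc (fun i => g i.succ) x))) μ := by
    exact ((ρ (g 0)).toContinuousLinearMap).integrable_comp (hint _)
  have hintS : Integrable (fun x => ∑ j : Fin n, ((-1 : ℝ) ^ ((j : ℕ) + 1)) •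
      f (Fin.snoc (Fin.contractNth j.castSucc (· * ·) g) x)) μ :=
    integrable_finset_sum _ fun j _ => (hint _).smul _
  have hintT3 : Integrable (fun x => ((-1 : ℝ) ^ (n + 1)) •
      f (Fin.snoc (Fin.contractNth (Fin.last n) (· * ·) g) (g (Fin.last n) * x))) μ :=
    ((hint (Fin.contractNth (Fin.last n) (· * ·) g)).comp_mul_left (g (Fin.last n))).smul _
  have hintT4 : Integrable (fun _ : G => ((-1 : ℝ) ^ (n + 2)) • f g) μ := integrable_const _
  have hint23 : Integrable (fun x => (∑ j : Fin n, ((-1 : ℝ) ^ ((j : ℕ) + 1)) •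
      f (Fin.snoc (Fin.contractNth j.castSucc (· * ·) g) x))
        + ((-1 : ℝ) ^ (n + 1)) •
            f (Fin.snoc (Fin.contractNth (Fin.last n) (· * ·) g) (g (Fin.last n) * x))) μ := by
    exact hintS.add hintT3
  have hint234 : Integrable (fun x => ((∑ j : Fin n, ((-1 : ℝ) ^ ((j : ℕ) + 1)) •
      f (Fin.snoc (Fin.contractNth j.castSucc (· * ·) g) x))
        + ((-1 : ℝ) ^ (n + 1)) •
            f (Fin.snoc (Fin.contractNth (Fin.last n) (· * ·) g) (g (Fin.last n) * x))
        + ((-1 : ℝ) ^ (n + 2)) • f g)) μ := by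
    exact hint23.add hintT4
  rw [integral_add hintT1 hint234] at hzero
  rw [integral_add hint23 hintT4] at hzero
  rw [integral_add hintS hintT3] at hzero
  rw [integral_finset_sum (μ := μ) Finset.univ
    (f := fun (j : Fin n) (x : G) => ((-1 : ℝ) ^ ((j : ℕ) + 1)) •
      f (Fin.snoc (Fin.contractNth j.castSucc (· * ·) g) x))
    (fun j _ => (hint _).smul _)] at hzero
  simp only [integral_smul, integral_const, measure_univ, ENNReal.toReal_one, probReal_univ, one_smul] at hzero
  have e1 : (∫ x, (ρ (g 0)) (f (Fin.snoc (fun i => g i.succ) x)) ∂μ)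
      = (ρ (g 0)) (∫ x, f (Fin.snoc (fun i => g i.succ) x) ∂μ) := by
    exact ContinuousLinearMap.integral_comp_comm (ρ (g 0) : V →L[ℝ] V) (hint _)
  rw [e1] at hzero
  rw [show (∫ x, f (Fin.snoc (Fin.contractNth (Fin.last n) (· * ·) g) (g (Fin.last n) * x)) ∂μ)
      = ∫ x, f (Fin.snoc (Fin.contractNth (Fin.last n) (· * ·) g) x) ∂μ from
    integral_mul_left_eq_self (fun y => f (Fin.snoc (Fin.contractNth (Fin.last n) (· * ·) g) y))
      (g (Fin.last n))] at hzero
  -- now hzero is an identity between `A`-values and `f g`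
  have hpow : ∀ m : ℕ, (-1 : ℝ) ^ m * (-1 : ℝ) ^ m = 1 := fun m => by
    rw [← pow_add, ← two_mul, pow_mul]
    norm_num
  set T1 : V := (ρ (g 0) : V →L[ℝ] V) (A fun i => g i.succ) with hT1
  set S : V := ∑ j : Fin n, ((-1 : ℝ) ^ ((j : ℕ) + 1)) • A (Fin.contractNth j.castSucc (· * ·) g)
    with hS
  set T3 : V := ((-1 : ℝ) ^ (n + 1)) • A (Fin.contractNth (Fin.last n) (· * ·) g) with hT3
  have hzero' : (T1 + (S + T3)) + ((-1 : ℝ) ^ (n + 2)) • f g = 0 := by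
    rw [add_assoc, add_assoc]
    rw [← add_assoc S T3 _]
    exact hzero
  have h5 : ((-1 : ℝ) ^ (n + 2)) • f g = -(T1 + (S + T3)) := by
    rw [eq_neg_iff_add_eq_zero, add_comm]
    exact hzero'
  have h6 : f g = ((-1 : ℝ) ^ (n + 1)) • (T1 + (S + T3)) := by
    calc f g = ((-1 : ℝ) ^ (n + 2)) • (((-1 : ℝ) ^ (n + 2)) • f g) := by
          rw [smul_smul, hpow, one_smul]
      _ = ((-1 : ℝ) ^ (n + 2)) • -(T1 + (S + T3)) := by rw [h5]
      _ = ((-1 : ℝ) ^ (n + 1)) • (T1 + (S + T3)) := by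
          rw [smul_neg, ← neg_smul]
          congr 1
          rw [pow_succ]
          ring
  -- conclude
  rw [h6]
  rw [Fin.sum_univ_castSucc (n := n)]
  simp only [Fin.coe_castSucc, Fin.val_last, _root_.map_smul, smul_add, smul_smul,
    Finset.smul_sum, ContinuousLinearEquiv.coe_coe, hT1, hS, hT3]
  rw [hpow, one_smul]
  have hcomm : (∑ x : Fin n, ((-1 : ℝ) ^ (n + 1) * (-1) ^ ((x : ℕ) + 1)) •
        A (Fin.contractNth x.castSucc (· * ·) g))
      = ∑ x : Fin n, ((-1 : ℝ) ^ ((x : ℕ) + 1) * (-1) ^ (n + 1)) •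
        A (Fin.contractNth x.castSucc (· * ·) g) :=
    Finset.sum_congr rfl fun j _ => by rw [mul_comm]
  rw [hcomm]
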